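/- Let X ∈ ℝ^d with σ(X) > 0 and let γ ∈ ℝ^d. Then LN is Fréchet differentiable at X, its total derivative at X is the linear map δ ↦ (A − B)δ, and the entries of this Jacobian matrix are given explicitly by (A − B)_{ij} = γ_i · ((δ_{ij} − 1/d)/σ(X) − (X_i − μ(X))(X_j − μ(X))/(d σ(X)³)), where δ_{ij} is the Kronecker delta. -/

import Mathlib

open scoped BigOperators

noncomputable section

/-- Mean of a vector in `ℝ^d`. -/
def mu {d : ℕ} (x : EuclideanSpace ℝ (Fin d)) : ℝ := (∑ i, x i) / d

/-- Variance `σ²` of a vector in `ℝ^d`. -/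
def sqVar {d : ℕ} (x : EuclideanSpace ℝ (Fin d)) : ℝ := (∑ i, (x i - mu x) ^ 2) / d

/-- Standard deviation `σ` of a vector in `ℝ^d`. -/
def sd {d : ℕ} (x : EuclideanSpace ℝ (Fin d)) : ℝ := Real.sqrt (sqVar x)

/-- The all-ones vector `𝟙 ∈ ℝ^d`. -/
def onesV {d : ℕ} : EuclideanSpace ℝ (Fin d) := WithLp.toLp 2 (fun _ => 1)

/-- LayerNorm with scale `γ`: `LN(x)_i = γ_i (x_i − μ(x))/σ(x)`. -/
def LN {d : ℕ} (γ : Fin d → ℝ) (x : EuclideanSpace ℝ (Fin d)) : EuclideanSpace ℝ (Fin d) :=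
  WithLp.toLp 2 (fun i => γ i * (x i - mu x) / sd x)

/-- `A = (1/σ(X)) diag(γ)(I − (1/d) 𝟙𝟙ᵀ)`. -/
def matA {d : ℕ} (γ : Fin d → ℝ) (X : EuclideanSpace ℝ (Fin d)) : Matrix (Fin d) (Fin d) ℝ :=
  (sd X)⁻¹ • (Matrix.diagonal γ * (1 - (d : ℝ)⁻¹ • Matrix.of (fun _ _ => (1 : ℝ))))

/-- `B = (1/(d σ(X)³)) diag(γ)(X − μ(X)𝟙)(X − μ(X)𝟙)ᵀ`. -/
def matB {d : ℕ} (γ : Fin d → ℝ) (X : EuclideanSpace ℝ (Fin d)) : Matrix (Fin d) (Fin d) ℝ :=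
  ((d : ℝ) * sd X ^ 3)⁻¹ •
    (Matrix.diagonal γ * Matrix.vecMulVec (fun i => X i - mu X) (fun j => X j - mu X))

/-- Matrix–vector multiplication on Euclidean spaces. -/
def mulVecE {m n : ℕ} (W : Matrix (Fin m) (Fin n) ℝ) (x : EuclideanSpace ℝ (Fin n)) :
    EuclideanSpace ℝ (Fin m) := WithLp.toLp 2 (fun i => ∑ j, W i j * x j)


section Aux

variable {d : ℕ}

/-- Derivative of `mu`. -/
def Lmu : EuclideanSpace ℝ (Fin d) →L[ℝ] ℝ := (d:ℝ)⁻¹ • ∑ j, EuclideanSpace.proj j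

theorem hasFDerivAt_mu (X : EuclideanSpace ℝ (Fin d)) :
    HasFDerivAt (mu (d := d)) (Lmu (d := d)) X := by
  have heq : mu (d := d) = fun x => (d:ℝ)⁻¹ * ∑ j, x j := by
    funext x; simp [mu, div_eq_inv_mul]
  rw [heq]
  exact (HasFDerivAt.fun_sum (fun j _ =>
    (EuclideanSpace.proj (𝕜 := ℝ) j).hasFDerivAt (x := X))).const_mul _

theorem Lmu_apply (δ : EuclideanSpace ℝ (Fin d)) : Lmu δ = (∑ j, δ j) / d := by
  simp [Lmu, div_eq_inv_mul, ContinuousLinearMap.sum_apply]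

/-- Derivative of `sqVar` at `X`. -/
def Lv (X : EuclideanSpace ℝ (Fin d)) : EuclideanSpace ℝ (Fin d) →L[ℝ] ℝ :=
  (d:ℝ)⁻¹ • ∑ j, ((X j - mu X) • (EuclideanSpace.proj j - Lmu) +
    (X j - mu X) • (EuclideanSpace.proj j - Lmu))

theorem hasFDerivAt_sqVar (X : EuclideanSpace ℝ (Fin d)) :
    HasFDerivAt (sqVar (d := d)) (Lv X) X := by
  have heq : sqVar (d := d) = fun x => (d:ℝ)⁻¹ * ∑ j, (x j - mu x) * (x j - mu x) := by
    funext x; simp [sqVar, div_eq_inv_mul, sq]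
  rw [heq]
  exact (HasFDerivAt.fun_sum (fun j _ =>
    (((EuclideanSpace.proj (𝕜 := ℝ) j).hasFDerivAt (x := X)).sub (hasFDerivAt_mu X)).mul
    (((EuclideanSpace.proj (𝕜 := ℝ) j).hasFDerivAt (x := X)).sub (hasFDerivAt_mu X)))).const_mul _

/-- Derivative of `sd` at `X`. -/
def Lsd (X : EuclideanSpace ℝ (Fin d)) : EuclideanSpace ℝ (Fin d) →L[ℝ] ℝ :=
  (1 / (2 * Real.sqrt (sqVar X))) • Lv X

theorem hasFDerivAt_sd (X : EuclideanSpace ℝ (Fin d)) (hs : sqVar X ≠ 0) :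
    HasFDerivAt (sd (d := d)) (Lsd X) X :=
  (hasFDerivAt_sqVar X).sqrt hs

theorem entriesLemma (d : ℕ) (hd : 1 ≤ d) (X : EuclideanSpace ℝ (Fin d)) (hX : 0 < sd X)
    (γ : Fin d → ℝ) : ∀ i j : Fin d, (matA γ X - matB γ X) i j =
      γ i * (((if i = j then (1 : ℝ) else 0) - 1 / d) / sd X -
        (X i - mu X) * (X j - mu X) / (d * sd X ^ 3)) := by
  intro i j
  have hs : sd X ≠ 0 := ne_of_gt hX
  have hdn : (d : ℝ) ≠ 0 := Nat.cast_ne_zero.mpr (by omega)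
  simp [matA, matB, Matrix.sub_apply, Matrix.smul_apply, Matrix.diagonal_mul,
    Matrix.vecMulVec_apply, Matrix.one_apply, Matrix.of_apply, smul_eq_mul]
  by_cases h : i = j <;> simp [h] <;> field_simp <;> ring

theorem coordDeriv (X : EuclideanSpace ℝ (Fin d)) (hX : 0 < sd X) (γ : Fin d → ℝ) (i : Fin d) :
    HasFDerivAt (fun x : EuclideanSpace ℝ (Fin d) => γ i * (x i - mu x) / sd x)
      ((γ i * (X i - mu X)) • ((-(sd X ^ 2)⁻¹) • Lsd X) +
        (sd X)⁻¹ • ((γ i) • (EuclideanSpace.proj i - Lmu))) X := by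
  have hvne : sqVar X ≠ 0 := ne_of_gt (Real.sqrt_pos.mp hX)
  have hs : sd X ≠ 0 := ne_of_gt hX
  have hinv : HasFDerivAt (fun x : EuclideanSpace ℝ (Fin d) => (sd x)⁻¹)
      ((-(sd X ^ 2)⁻¹) • Lsd X) X :=
    (hasDerivAt_inv hs).comp_hasFDerivAt X (hasFDerivAt_sd X hvne)
  have h1 : HasFDerivAt (fun x : EuclideanSpace ℝ (Fin d) => γ i * (x i - mu x))
      ((γ i) • (EuclideanSpace.proj (𝕜 := ℝ) i - Lmu)) X :=
    (((EuclideanSpace.proj (𝕜 := ℝ) i).hasFDerivAt (x := X)).sub (hasFDerivAt_mu X)).const_mul _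
  have heq : (fun x : EuclideanSpace ℝ (Fin d) => γ i * (x i - mu x) / sd x)
      = fun x => (γ i * (x i - mu x)) * (sd x)⁻¹ := by
    funext x; rw [div_eq_mul_inv]
  rw [heq]
  exact h1.mul hinv

theorem coordCLMeq (hd : 1 ≤ d) (X : EuclideanSpace ℝ (Fin d)) (hX : 0 < sd X)
    (γ : Fin d → ℝ) (i : Fin d) :
    ((γ i * (X i - mu X)) • ((-(sd X ^ 2)⁻¹) • Lsd X) +
        (sd X)⁻¹ • ((γ i) • (EuclideanSpace.proj i - Lmu))) =
    (ContinuousLinearMap.proj i).comp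
      (((PiLp.continuousLinearEquiv 2 ℝ (fun _ : Fin d => ℝ)) :
          EuclideanSpace ℝ (Fin d) →L[ℝ] (Fin d → ℝ)).comp
        ((Matrix.toEuclideanLin (matA γ X - matB γ X)).toContinuousLinearMap)) := by
  have hs : sd X ≠ 0 := ne_of_gt hX
  have hdn : (d : ℝ) ≠ 0 := Nat.cast_ne_zero.mpr (by omega)
  have hsum : ∑ j, (X j - mu X) = 0 := by
    simp [Finset.sum_sub_distrib, mu]
    field_simp
    ring
  ext δ
  show (((γ i * (X i - mu X)) • ((-(sd X ^ 2)⁻¹) • Lsd X) +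
      (sd X)⁻¹ • ((γ i) • (EuclideanSpace.proj (𝕜 := ℝ) i - Lmu)) :
      EuclideanSpace ℝ (Fin d) →L[ℝ] ℝ)) δ
    = ∑ x, (matA γ X - matB γ X) i x * δ x
  simp only [ContinuousLinearMap.add_apply, ContinuousLinearMap.coe_smul', Pi.smul_apply,
    ContinuousLinearMap.coe_sub', Pi.sub_apply, ContinuousLinearMap.comp_apply,
    ContinuousLinearMap.proj_apply, smul_eq_mul, Lsd, Lv, ContinuousLinearMap.sum_apply,
    PiLp.proj_apply, Lmu_apply]
  rw [show Real.sqrt (sqVar X) = sd X from rfl]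
  have hL : ∑ x : Fin d, ((X x - mu X) * (δ x - (∑ j : Fin d, δ j) / d)
        + (X x - mu X) * (δ x - (∑ j : Fin d, δ j) / d))
      = 2 * ∑ x : Fin d, (X x - mu X) * δ x := by
    have hp : ∀ x : Fin d, (X x - mu X) * (δ x - (∑ j : Fin d, δ j) / d)
        + (X x - mu X) * (δ x - (∑ j : Fin d, δ j) / d)
        = 2 * ((X x - mu X) * δ x) - (2 * ((∑ j : Fin d, δ j) / d)) * (X x - mu X) := by
      intro x; ring
    rw [Finset.sum_congr rfl fun x _ => hp x, Finset.sum_sub_distrib, ← Finset.mul_sum,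
      ← Finset.mul_sum, hsum, mul_zero, sub_zero]
  have hR : ∑ x : Fin d, (matA γ X - matB γ X) i x * δ x
      = γ i / sd X * δ i - γ i / (d * sd X) * (∑ j : Fin d, δ j)
        - γ i * (X i - mu X) / (d * sd X ^ 3) * ∑ x : Fin d, (X x - mu X) * δ x := by
    have h2 : ∀ x : Fin d, (matA γ X - matB γ X) i x * δ x =
        (if i = x then γ i / sd X * δ x else 0) - γ i / (d * sd X) * δ x
          - γ i * (X i - mu X) / (d * sd X ^ 3) * ((X x - mu X) * δ x) := by
      intro x
      rw [entriesLemma d hd X hX γ i x]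
      by_cases h : i = x <;> simp [h] <;> field_simp <;> ring
    rw [Finset.sum_congr rfl fun x _ => h2 x, Finset.sum_sub_distrib, Finset.sum_sub_distrib,
      Finset.sum_ite_eq, ← Finset.mul_sum, ← Finset.mul_sum]
    simp
  rw [hL, hR]
  field_simp
  ring

end Aux

/-- LayerNorm is Fréchet differentiable at `X` (where `σ(X) > 0`) with
total derivative `δ ↦ (A − B)δ`, and the Jacobian entries are
`(A − B)_{ij} = γ_i ((δ_{ij} − 1/d)/σ(X) − (X_i − μ(X))(X_j − μ(X))/(d σ(X)³))`. -/
theorem layerNorm_hasFDerivAt_and_jacobian_entries (d : ℕ) (hd : 1 ≤ d)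
    (X : EuclideanSpace ℝ (Fin d)) (hX : 0 < sd X) (γ : Fin d → ℝ) :
    HasFDerivAt (LN γ)
      ((Matrix.toEuclideanLin (matA γ X - matB γ X)).toContinuousLinearMap) X ∧
    ∀ i j : Fin d, (matA γ X - matB γ X) i j =
      γ i * (((if i = j then (1 : ℝ) else 0) - 1 / d) / sd X -
        (X i - mu X) * (X j - mu X) / (d * sd X ^ 3)) := by
  constructor
  · rw [← (PiLp.continuousLinearEquiv 2 ℝ (fun _ : Fin d => ℝ)).comp_hasFDerivAt_iff]
    rw [hasFDerivAt_pi']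
    intro i
    have key := coordDeriv X hX γ i
    rw [coordCLMeq hd X hX γ i] at key
    refine HasFDerivAt.congr_of_eventuallyEq key (Filter.Eventually.of_forall fun x => ?_)
    simp [LN]
  · exact entriesLemma d hd X hX γ
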